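/- Let B be a supersoluble brace. If B is left-nilpotent and Ker(λ) ⊆ Z_n(B,·) for some n ∈ ℕ (where Z_n(B,·) is the n-th term of the upper central series of the multiplicative group), then the multiplicative group (B,·) is nilpotent. -/

import Mathlib

/-- A (skew left) brace: a set with an additive group structure (not necessarily abelian)
and a multiplicative group structure sharing the same identity, satisfying the skew
distributive law `a * (b + c) = a * b + -a + a * c`. -/
class SkewBrace (B : Type*) extends AddGroup B, Group B where
  one_eq_zero : (1 : B) = (0 : B)
  skew_distrib : ∀ a b c : B, a * (b + c) = a * b + -a + a * c

/-- A group is supersoluble if it has a finite chain of normal subgroups with all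
factors cyclic. -/
def Group.IsSupersoluble (G : Type*) [Group G] : Prop :=
  ∃ (n : ℕ) (H : ℕ → Subgroup G),
    H 0 = ⊥ ∧ H n = ⊤ ∧ (∀ i, (H i).Normal) ∧ (∀ i, i < n → H i ≤ H (i + 1)) ∧
    ∀ i, i < n → ∃ x ∈ H (i + 1), ∀ y ∈ H (i + 1), ∃ k : ℤ, (x ^ k)⁻¹ * y ∈ H i

namespace SkewBrace

variable {B : Type*} [SkewBrace B]

/-- `lam a b = -a + a * b`, i.e. `λ_a(b)`. -/
def lam (a b : B) : B := -a + a * b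

/-- the star operation `a ∗ b = λ_a(b) - b`. -/
def starOp (a b : B) : B := lam a b + -b

/-- the additive commutator `[a,b]_+`. -/
def addCommutator (a b : B) : B := -a + -b + a + b

/-- A subbrace of `B`: a subset that is a subgroup of both `(B,+)` and `(B,·)`. -/
structure Subbrace (B : Type*) [SkewBrace B] where
  carrier : Set B
  zero_mem : (0 : B) ∈ carrier
  add_mem : ∀ {a b : B}, a ∈ carrier → b ∈ carrier → a + b ∈ carrier
  neg_mem : ∀ {a : B}, a ∈ carrier → -a ∈ carrier
  mul_mem : ∀ {a b : B}, a ∈ carrier → b ∈ carrier → a * b ∈ carrier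
  inv_mem : ∀ {a : B}, a ∈ carrier → a⁻¹ ∈ carrier

/-- An ideal of `B`: a subbrace that is normal in `(B,+)` and in `(B,·)` and is
invariant under all the maps `λ_b`. -/
structure BraceIdeal (B : Type*) [SkewBrace B] extends Subbrace B where
  addConj_mem : ∀ (b : B) {a : B}, a ∈ carrier → b + a + -b ∈ carrier
  mulConj_mem : ∀ (b : B) {a : B}, a ∈ carrier → b * a * b⁻¹ ∈ carrier
  lam_mem : ∀ (b : B) {a : B}, a ∈ carrier → lam b a ∈ carrier

/-- The additive subgroup underlying a subbrace. -/
def Subbrace.addSubgroup (S : Subbrace B) : AddSubgroup B where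
  carrier := S.carrier
  zero_mem' := S.zero_mem
  add_mem' := S.add_mem
  neg_mem' := S.neg_mem

/-- The multiplicative subgroup underlying a subbrace. -/
def Subbrace.subgroup (S : Subbrace B) : Subgroup B where
  carrier := S.carrier
  one_mem' := by rw [one_eq_zero]; exact S.zero_mem
  mul_mem' := S.mul_mem
  inv_mem' := S.inv_mem

/-- Given ideals `J ≤ I` of `B`, `MemSocQuotRel I J x` says that the coset of `x`
lies in `Soc(I/J) = Ker(λ) ∩ Z(I/J, +)` (for `I = B` take `I = Set.univ`). -/
def MemSocQuotRel (I J : Set B) (x : B) : Prop :=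
  x ∈ I ∧ (∀ y ∈ I, -y + lam x y ∈ J) ∧ ∀ y ∈ I, -(y + x) + (x + y) ∈ J

/-- Given ideals `J ≤ I` of `B`, `MemZetaQuotRel I J x` says that the coset of `x`
lies in `ζ(I/J) = Soc(I/J) ∩ Z(I/J, ·)`. -/
def MemZetaQuotRel (I J : Set B) (x : B) : Prop :=
  MemSocQuotRel I J x ∧ ∀ y ∈ I, (y * x)⁻¹ * (x * y) ∈ J

/-- The coset of `x` lies in `Soc(B/J)`. -/
def MemSocQuot (J : Set B) (x : B) : Prop := MemSocQuotRel Set.univ J x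

/-- The coset of `x` lies in `ζ(B/J)`. -/
def MemZetaQuot (J : Set B) (x : B) : Prop := MemZetaQuotRel Set.univ J x

/-- For ideals `I ≤ J`, the additive group of the quotient `J/I` is infinite cyclic. -/
def QuotAddInfCyclic (I J : Set B) : Prop :=
  ∃ x ∈ J, (∀ y ∈ J, ∃ n : ℤ, -(n • x) + y ∈ I) ∧ ∀ n : ℤ, n • x ∈ I → n = 0

/-- For ideals `I ≤ J`, the quotient `J/I` has prime order `p`. -/
def QuotPrimeOrder (I J : Set B) (p : ℕ) : Prop :=
  p.Prime ∧ ∃ x ∈ J, x ∉ I ∧ p • x ∈ I ∧ ∀ y ∈ J, ∃ n : ℤ, -(n • x) + y ∈ I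

/-- A brace is supersoluble if it has a finite chain of ideals each factor of which
either is additively infinite cyclic and contained in the socle of the corresponding
quotient, or has prime order. -/
def IsSupersoluble (B : Type*) [SkewBrace B] : Prop :=
  ∃ (n : ℕ) (I : ℕ → BraceIdeal B),
    (I 0).carrier = {0} ∧ (I n).carrier = Set.univ ∧
    (∀ i, i < n → (I i).carrier ⊆ (I (i + 1)).carrier) ∧
    ∀ i, i < n →
      (QuotAddInfCyclic (I i).carrier (I (i + 1)).carrier ∧
        ∀ x ∈ (I (i + 1)).carrier, MemSocQuot (I i).carrier x) ∨
      ∃ p : ℕ, QuotPrimeOrder (I i).carrier (I (i + 1)).carrier p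

/-- The upper socle series of the brace (carrier of the ideal) `I`. -/
def socChainRel (I : Set B) : ℕ → Set B
  | 0 => {0}
  | n + 1 => {x | MemSocQuotRel I (socChainRel I n) x}

/-- The upper central series of the brace (carrier of the ideal) `I`. -/
def zetaChainRel (I : Set B) : ℕ → Set B
  | 0 => {0}
  | n + 1 => {x | MemZetaQuotRel I (zetaChainRel I n) x}

/-- The upper socle series `Soc_n(B)` of `B`. -/
def socChain (B : Type*) [SkewBrace B] : ℕ → Set B := socChainRel Set.univ

/-- The upper central series `ζ_n(B)` of `B`. -/
def zetaChain (B : Type*) [SkewBrace B] : ℕ → Set B := zetaChainRel Set.univ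

/-- A brace is centrally nilpotent if its upper central series reaches `B`. -/
def IsCentrallyNilpotent (B : Type*) [SkewBrace B] : Prop :=
  ∃ m : ℕ, zetaChain B m = Set.univ

end SkewBrace

namespace SkewBrace

/-- The left series of the brace `B`: `L 0 = B`, and `L (n+1)` is the additive
subgroup generated by all `a ∗ x` with `a ∈ B`, `x ∈ L n`. -/
def leftChain (B : Type*) [SkewBrace B] : ℕ → Set B
  | 0 => Set.univ
  | n + 1 => ↑(AddSubgroup.closure {z : B | ∃ a : B, ∃ x ∈ leftChain B n, z = starOp a x})

/-- A brace is left-nilpotent if its left series reaches `{0}`. -/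
def IsLeftNilpotent (B : Type*) [SkewBrace B] : Prop :=
  ∃ m : ℕ, leftChain B m = {0}


section NilpotencyProof

variable {B : Type*} [SkewBrace B]

open scoped commutatorElement

lemma grp1 {G : Type*} [Group G] (x y : G) : x * (y⁻¹ * x) * x⁻¹ = x * y⁻¹ := by group

theorem sb_mul_zero (a : B) : a * (0 : B) = a := by
  have h := skew_distrib a 0 0
  rw [add_zero] at h
  have h3 := right_eq_add.mp h
  exact add_neg_eq_zero.mp h3

theorem lam_add' (a x y : B) : lam a (x + y) = lam a x + lam a y := by
  unfold lam
  rw [skew_distrib]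
  simp [add_assoc]

theorem mul_eq_add_lam (a x : B) : a * x = a + lam a x := by
  unfold lam; rw [add_neg_cancel_left]

theorem lam_lam (a b x : B) : lam (a * b) x = lam a (lam b x) := by
  have h1 : (a * b) + lam (a * b) x = (a * b) + lam a (lam b x) := by
    calc (a * b) + lam (a * b) x = (a * b) * x := (mul_eq_add_lam _ _).symm
      _ = a * (b * x) := mul_assoc a b x
      _ = a * (b + lam b x) := by rw [← mul_eq_add_lam]
      _ = a * b + -a + a * (lam b x) := skew_distrib a b (lam b x)
      _ = a * b + lam a (lam b x) := by rw [add_assoc]; rfl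
  exact add_left_cancel h1

theorem lam_zero' (a : B) : lam a 0 = 0 := by
  unfold lam; rw [sb_mul_zero, neg_add_cancel]

theorem lam_one' (x : B) : lam 1 x = x := by
  unfold lam; rw [one_mul, one_eq_zero, neg_zero, zero_add]

theorem lam_neg' (a x : B) : lam a (-x) = -(lam a x) := by
  have h := lam_add' a x (-x)
  rw [add_neg_cancel, lam_zero'] at h
  exact (neg_eq_of_add_eq_zero_right h.symm).symm

def lamHom (a : B) : B →+ B where
  toFun := lam a
  map_zero' := lam_zero' a
  map_add' := lam_add' a

theorem lam_zsmul (a : B) (n : ℤ) (x : B) : lam a (n • x) = n • lam a x :=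
  map_zsmul (lamHom a) n x


theorem BraceIdeal.nsmul_mem (P : BraceIdeal B) {x : B} (hx : x ∈ P.carrier) (n : ℕ) :
    n • x ∈ P.carrier := by
  induction n with
  | zero => simpa using P.zero_mem
  | succ k ih => rw [succ_nsmul]; exact P.add_mem ih hx

theorem BraceIdeal.zsmul_mem (P : BraceIdeal B) {x : B} (hx : x ∈ P.carrier) (n : ℤ) :
    n • x ∈ P.carrier := by
  cases n with
  | ofNat k => rw [Int.ofNat_eq_coe, natCast_zsmul]; exact P.nsmul_mem hx k
  | negSucc k => rw [negSucc_zsmul]; exact P.neg_mem (P.nsmul_mem hx _)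

/-- congruence modulo the ideal `P` -/
def MEq (P : BraceIdeal B) (x y : B) : Prop := -x + y ∈ P.carrier

theorem MEq.rfl {P : BraceIdeal B} {x : B} : MEq P x x := by
  unfold MEq; rw [neg_add_cancel]; exact P.zero_mem

theorem MEq.symm {P : BraceIdeal B} {x y : B} (h : MEq P x y) : MEq P y x := by
  have h2 := P.neg_mem h
  rwa [neg_add_rev, neg_neg] at h2

theorem MEq.trans {P : BraceIdeal B} {x y z : B} (h1 : MEq P x y) (h2 : MEq P y z) :
    MEq P x z := by
  have h3 := P.add_mem h1 h2
  rwa [add_assoc, add_neg_cancel_left] at h3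

theorem MEq.mem {P : BraceIdeal B} {x y : B} (h : MEq P x y) (hx : x ∈ P.carrier) :
    y ∈ P.carrier := by
  have := P.add_mem hx h
  rwa [add_neg_cancel_left] at this

theorem MEq_zero_iff {P : BraceIdeal B} {y : B} : MEq P 0 y ↔ y ∈ P.carrier := by
  unfold MEq; rw [neg_zero, zero_add]

theorem MEq.add_left {P : BraceIdeal B} (z : B) {x y : B} (h : MEq P x y) :
    MEq P (z + x) (z + y) := by
  unfold MEq
  rw [neg_add_rev, add_assoc, neg_add_cancel_left]
  exact h

theorem MEq.add_right {P : BraceIdeal B} (z : B) {x y : B} (h : MEq P x y) :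
    MEq P (x + z) (y + z) := by
  unfold MEq
  have h2 := P.addConj_mem (-z) h
  rw [neg_neg] at h2
  have he : -(x + z) + (y + z) = -z + (-x + y) + z := by
    rw [neg_add_rev]; simp [add_assoc]
  rwa [he]

theorem MEq.add {P : BraceIdeal B} {x y u v : B} (h1 : MEq P x y) (h2 : MEq P u v) :
    MEq P (x + u) (y + v) := (h1.add_right u).trans (h2.add_left y)

theorem MEq.neg {P : BraceIdeal B} {x y : B} (h : MEq P x y) : MEq P (-x) (-y) := by
  unfold MEq
  rw [neg_neg]
  have h2 := P.addConj_mem x (h.symm)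
  have he : x + (-y + x) + -x = x + -y := grp1 (G := Multiplicative B) x y
  rwa [he] at h2

theorem MEq.lam_congr {P : BraceIdeal B} (a : B) {x y : B} (h : MEq P x y) :
    MEq P (lam a x) (lam a y) := by
  have := P.lam_mem a h
  rwa [lam_add', lam_neg'] at this

theorem MEq.nsmul {P : BraceIdeal B} (n : ℕ) {x y : B} (h : MEq P x y) :
    MEq P (n • x) (n • y) := by
  induction n with
  | zero => rw [zero_nsmul, zero_nsmul]; exact MEq.rfl
  | succ k ih => rw [succ_nsmul, succ_nsmul]; exact ih.add h

theorem MEq.zsmul {P : BraceIdeal B} (n : ℤ) {x y : B} (h : MEq P x y) :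
    MEq P (n • x) (n • y) := by
  cases n with
  | ofNat k => rw [Int.ofNat_eq_coe, natCast_zsmul, natCast_zsmul]; exact h.nsmul k
  | negSucc k => rw [negSucc_zsmul, negSucc_zsmul]; exact (h.nsmul _).neg


theorem starOp_mem_leftChain (k : ℕ) (a x : B) (hx : x ∈ leftChain B k) :
    starOp a x ∈ leftChain B (k + 1) :=
  AddSubgroup.subset_closure ⟨a, x, hx, Eq.refl _⟩

theorem abelian_factor' (N : BraceIdeal B) (x₀ : B) (S : Set B)
    (hgen : ∀ y ∈ S, ∃ n : ℤ, -(n • x₀) + y ∈ N.carrier)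
    {q v : B} (hq : q ∈ S) (hv : v ∈ S) :
    -q + -v + q + v ∈ N.carrier := by
  obtain ⟨n, hn⟩ := hgen q hq
  obtain ⟨k, hk⟩ := hgen v hv
  have hq' : MEq N (n • x₀) q := hn
  have hv' : MEq N (k • x₀) v := hk
  have e : MEq N (-(n • x₀) + -(k • x₀) + n • x₀ + k • x₀) (-q + -v + q + v) :=
    ((hq'.neg.add hv'.neg).add hq').add hv'
  have hz : -(n • x₀) + -(k • x₀) + n • x₀ + k • x₀ = 0 := by
    rw [← neg_zsmul, ← neg_zsmul, ← add_zsmul, ← add_zsmul, ← add_zsmul]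
    have : -n + -k + n + k = 0 := by ring
    rw [this, zero_zsmul]
  rw [hz] at e
  exact MEq_zero_iff.mp e

/-- in the prime case, `t • x₀ ∈ N` forces `p ∣ t`. -/
theorem dvd_of_zsmul_mem (N : BraceIdeal B) (x₀ : B) (hx₀N : x₀ ∉ N.carrier)
    (p : ℕ) (hp : p.Prime) (hpx : (p : ℤ) • x₀ ∈ N.carrier) :
    ∀ t : ℤ, t • x₀ ∈ N.carrier → (p : ℤ) ∣ t := by
  intro t ht
  have hp0 : (0 : ℤ) < (p : ℤ) := by exact_mod_cast hp.pos
  set r := t % (p : ℤ) with hr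
  have hrx : r • x₀ ∈ N.carrier := by
    have : r = t + -(t / (p : ℤ)) * (p : ℤ) := by
      rw [hr]; rw [Int.emod_def]; ring
    rw [this, add_zsmul, neg_mul, neg_zsmul, mul_zsmul]
    exact N.add_mem ht (N.neg_mem (N.zsmul_mem hpx _))
  by_cases hr0 : r = 0
  · rw [hr] at hr0; exact Int.dvd_of_emod_eq_zero hr0
  · exfalso
    have h1 : 0 < r := lt_of_le_of_ne (Int.emod_nonneg t (ne_of_gt hp0)) (Ne.symm hr0)
    have h2 : r < (p : ℤ) := Int.emod_lt_of_pos t hp0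
    have hcop : IsCoprime r (p : ℤ) := by
      rw [Int.isCoprime_iff_gcd_eq_one]
      have hna : r.natAbs < p := by omega
      have hnd : ¬ (p ∣ r.natAbs) := by
        intro hdvd
        have := Nat.le_of_dvd (by omega) hdvd
        omega
      have hcp : Nat.Coprime p r.natAbs := (Nat.Prime.coprime_iff_not_dvd hp).mpr hnd
      show Nat.gcd r.natAbs (Int.natAbs (p : ℤ)) = 1
      rw [Int.natAbs_natCast, Nat.gcd_comm]
      exact hcp
    obtain ⟨a, b, hab⟩ := hcop
    have : x₀ ∈ N.carrier := by
      have : (a * r + b * (p : ℤ)) • x₀ ∈ N.carrier := by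
        rw [add_zsmul, mul_zsmul, mul_zsmul]
        exact N.add_mem (N.zsmul_mem hrx a) (N.zsmul_mem hpx b)
      rwa [hab, one_zsmul] at this
    exact hx₀N this

lemma gh1 {G : Type*} [Group G] (u v q L : G) :
    q⁻¹ * ((u*v)⁻¹ * (L * (q*v))) = ((v*q)⁻¹ * (u⁻¹ * L) * (v*q)) * (q⁻¹*v⁻¹*q*v) := by
  group

lemma gh2 {G : Type*} [Group G] (q E : G) : q * (q⁻¹ * E) * q⁻¹ = E * q⁻¹ := by group

theorem trivial_factor_action
    (N M : BraceIdeal B) (hNM : N.carrier ⊆ M.carrier)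
    (m : ℕ) (hLm : leftChain B m = {0})
    (x₀ : B) (hx₀M : x₀ ∈ M.carrier)
    (hgen : ∀ y ∈ M.carrier, ∃ n : ℤ, -(n • x₀) + y ∈ N.carrier)
    (hfree : (∀ n : ℤ, n • x₀ ∈ N.carrier → n = 0) ∨
      ∃ p : ℕ, p.Prime ∧ x₀ ∉ N.carrier ∧ (p : ℤ) • x₀ ∈ N.carrier) :
    ∀ a x, x ∈ M.carrier → -x + lam a x ∈ N.carrier := by
  classical
  have hx₀N : x₀ ∉ N.carrier := by
    rcases hfree with hf | ⟨p, hp, h, _⟩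
    · intro hmem
      have := hf 1 (by rwa [one_zsmul])
      norm_num at this
    · exact h
  set D : ℕ → Set B := fun k =>
    {z | ∃ u ∈ N.carrier, ∃ v, v ∈ M.carrier ∧ v ∈ leftChain B k ∧ z = u + v} with hD
  have hD0 : x₀ ∈ D 0 := ⟨0, N.zero_mem, x₀, hx₀M, Set.mem_univ x₀, (zero_add x₀).symm⟩
  have hDM : ∀ k, D k ⊆ M.carrier := by
    rintro k z ⟨u, hu, v, hvM, _, rfl⟩
    exact M.add_mem (hNM hu) hvM
  have hDm : D m ⊆ N.carrier := by
    rintro z ⟨u, hu, v, _, hvL, rfl⟩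
    rw [hLm] at hvL
    rw [Set.mem_singleton_iff.mp hvL, add_zero]
    exact hu
  have hDstep : ∀ k a z, z ∈ D k → -z + lam a z ∈ D (k + 1) := by
    rintro k a z ⟨u, hu, v, hvM, hvL, rfl⟩
    set q := starOp a v with hqdef
    have hqL : q ∈ leftChain B (k+1) := starOp_mem_leftChain k a v hvL
    have hqM : q ∈ M.carrier := M.add_mem (M.lam_mem a hvM) (M.neg_mem hvM)
    have hlamv : lam a v = q + v := by
      rw [hqdef]; show lam a v = (lam a v + -v) + v; rw [neg_add_cancel_right]
    have hw : -u + lam a u ∈ N.carrier := N.add_mem (N.neg_mem hu) (N.lam_mem a hu)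
    have hc : -q + -v + q + v ∈ N.carrier := abelian_factor' N x₀ M.carrier hgen hqM hvM
    have hn1 : -(v + q) + (-u + lam a u) + (v + q) ∈ N.carrier := by
      have := N.addConj_mem (-(v + q)) hw
      rwa [neg_neg] at this
    have key : -q + (-(u + v) + lam a (u + v)) =
        (-(v + q) + (-u + lam a u) + (v + q)) + (-q + -v + q + v) := by
      rw [lam_add', hlamv]
      exact gh1 (G := Multiplicative B) (Multiplicative.ofAdd u) (Multiplicative.ofAdd v)
        (Multiplicative.ofAdd q) (Multiplicative.ofAdd (lam a u))
    have hmem1 : -q + (-(u + v) + lam a (u + v)) ∈ N.carrier := by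
      rw [key]; exact N.add_mem hn1 hc
    have hmem2 : (-(u + v) + lam a (u + v)) + -q ∈ N.carrier := by
      have h2 := N.addConj_mem q hmem1
      have he : q + (-q + (-(u + v) + lam a (u + v))) + -q =
          (-(u + v) + lam a (u + v)) + -q :=
        gh2 (G := Multiplicative B) (Multiplicative.ofAdd q)
          (Multiplicative.ofAdd (-(u + v) + lam a (u + v)))
      rwa [he] at h2
    exact ⟨_, hmem2, q, hqM, hqL, (neg_add_cancel_right _ _).symm⟩
  have hex : ∃ k, D k ⊆ N.carrier := ⟨m, hDm⟩
  set k₀ := Nat.find hex with hk₀def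
  have hk₀ : D k₀ ⊆ N.carrier := Nat.find_spec hex
  have hk₀pos : 0 < k₀ := by
    rcases Nat.eq_zero_or_pos k₀ with h | h
    · exact absurd (hk₀ (by rw [h] at hk₀ ⊢; exact hD0)) hx₀N
    · exact h
  obtain ⟨y, hyD, hyN⟩ : ∃ y, y ∈ D (k₀ - 1) ∧ y ∉ N.carrier := by
    by_contra hcon
    push_neg at hcon
    exact Nat.find_min hex (show k₀ - 1 < k₀ by omega) fun z hz => hcon z hz
  have hyM : y ∈ M.carrier := hDM _ hyD
  have hstepy : ∀ a, MEq N y (lam a y) := by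
    intro a
    have h := hDstep (k₀ - 1) a y hyD
    rw [Nat.sub_add_cancel hk₀pos] at h
    exact hk₀ h
  obtain ⟨n', hn'⟩ := hgen y hyM
  have hn'' : MEq N (n' • x₀) y := hn'
  have hn'0 : ¬ (n' • x₀ ∈ N.carrier) := fun h => hyN (hn''.mem h)
  have hfix : ∀ a, MEq N x₀ (lam a x₀) := by
    intro a
    obtain ⟨na, hna⟩ := hgen (lam a x₀) (M.lam_mem a hx₀M)
    have hna' : MEq N (na • x₀) (lam a x₀) := hna
    have c1 : MEq N ((n' * na) • x₀) (n' • lam a x₀) := by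
      rw [mul_zsmul]; exact hna'.zsmul n'
    have c2 : MEq N (n' • lam a x₀) (lam a y) := by
      rw [← lam_zsmul]; exact hn''.lam_congr a
    have c4 : MEq N ((n' * na) • x₀) (n' • x₀) :=
      ((c1.trans c2).trans (hstepy a).symm).trans hn''.symm
    have ht : (-(n' * na) + n') • x₀ ∈ N.carrier := by
      have h : -((n' * na) • x₀) + n' • x₀ ∈ N.carrier := c4
      rwa [← neg_zsmul, ← add_zsmul] at h
    rcases hfree with hf | ⟨p, hp, hpN, hpx⟩
    · have h0 : -(n' * na) + n' = 0 := hf _ ht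
      have hn'ne : n' ≠ 0 := fun h => hn'0 (by rw [h, zero_zsmul]; exact N.zero_mem)
      have h1 : n' * na = n' * 1 := by rw [mul_one]; linarith
      have h2 : na = 1 := mul_left_cancel₀ hn'ne h1
      rw [h2, one_zsmul] at hna'
      exact hna'
    · have hdvd : (p : ℤ) ∣ (-(n' * na) + n') := dvd_of_zsmul_mem N x₀ hpN p hp hpx _ ht
      have heq : -(n' * na) + n' = n' * (1 - na) := by ring
      rw [heq] at hdvd
      have hpn' : ¬ ((p : ℤ) ∣ n') := by
        rintro ⟨c, hc⟩
        apply hn'0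
        rw [hc, mul_comm, mul_zsmul]
        exact N.zsmul_mem hpx c
      have hdvd2 : (p : ℤ) ∣ (1 - na) :=
        ((Int.Prime.dvd_mul' hp hdvd).resolve_left hpn')
      obtain ⟨c, hc⟩ := hdvd2
      have h1 : -1 + na = (-c) * (p : ℤ) := by
        rw [neg_mul, show c * (p : ℤ) = (p : ℤ) * c from mul_comm c p, ← hc]; ring
      have hx2 : (-1 + na) • x₀ ∈ N.carrier := by
        rw [h1, mul_zsmul]; exact N.zsmul_mem hpx (-c)
      have h3 : MEq N x₀ (na • x₀) := by
        show -x₀ + na • x₀ ∈ N.carrier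
        rwa [show -x₀ + na • x₀ = (-1 + na) • x₀ by rw [add_zsmul, neg_one_zsmul]]
      exact h3.trans hna'
  intro a x hx
  obtain ⟨n, hn⟩ := hgen x hx
  have hn2 : MEq N (n • x₀) x := hn
  have e1 : MEq N (n • x₀) (n • lam a x₀) := (hfix a).zsmul n
  have e2 : MEq N (lam a (n • x₀)) (lam a x) := hn2.lam_congr a
  rw [lam_zsmul] at e2
  exact (hn2.symm.trans (e1.trans e2) : MEq N x (lam a x))

/-- the semidirect product `(B,+) ⋊_λ (B,·)` -/
@[ext] structure SProd (B : Type*) [SkewBrace B] where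
  fst : B
  snd : B

instance : One (SProd B) := ⟨⟨0, 1⟩⟩
instance : Mul (SProd B) := ⟨fun x y => ⟨x.fst + lam x.snd y.fst, x.snd * y.snd⟩⟩
instance : Inv (SProd B) := ⟨fun x => ⟨lam x.snd⁻¹ (-x.fst), x.snd⁻¹⟩⟩

instance : Group (SProd B) where
  mul_assoc a b c := by
    ext
    · show (a.fst + lam a.snd b.fst) + lam (a.snd * b.snd) c.fst =
        a.fst + lam a.snd (b.fst + lam b.snd c.fst)
      rw [lam_lam, add_assoc, ← lam_add']
    · exact mul_assoc a.snd b.snd c.snd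
  one_mul a := by
    ext
    · show 0 + lam 1 a.fst = a.fst; rw [lam_one', zero_add]
    · show 1 * a.snd = a.snd; exact one_mul _
  mul_one a := by
    ext
    · show a.fst + lam a.snd 0 = a.fst; rw [lam_zero', add_zero]
    · show a.snd * 1 = a.snd; exact mul_one _
  inv_mul_cancel a := by
    ext
    · show lam a.snd⁻¹ (-a.fst) + lam a.snd⁻¹ a.fst = 0
      rw [← lam_add', neg_add_cancel, lam_zero']
    · show a.snd⁻¹ * a.snd = 1; exact inv_mul_cancel _

/-- the canonical embedding of `(B,·)` -/
def sdr : B →* SProd B :=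
  MonoidHom.mk' (fun g => ⟨0, g⟩) (fun a b => by
    ext
    · show (0 : B) = 0 + lam a 0; rw [lam_zero', add_zero]
    · rfl)

/-- the subgroup of `SProd B` corresponding to an ideal -/
def SG (P : BraceIdeal B) : Subgroup (SProd B) where
  carrier := {h | h.snd = 1 ∧ h.fst ∈ P.carrier}
  one_mem' := ⟨rfl, P.zero_mem⟩
  mul_mem' := by
    rintro a b ⟨ha1, ha2⟩ ⟨hb1, hb2⟩
    refine ⟨?_, ?_⟩
    · show a.snd * b.snd = 1; rw [ha1, hb1, one_mul]
    · show a.fst + lam a.snd b.fst ∈ P.carrier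
      rw [ha1, lam_one']
      exact P.add_mem ha2 hb2
  inv_mem' := by
    rintro a ⟨ha1, ha2⟩
    refine ⟨?_, ?_⟩
    · show a.snd⁻¹ = 1; rw [ha1, inv_one]
    · show lam a.snd⁻¹ (-a.fst) ∈ P.carrier
      rw [ha1, inv_one, lam_one']
      exact P.neg_mem ha2

instance SG_normal (P : BraceIdeal B) : (SG P).Normal := by
  constructor
  intro h hm g
  obtain ⟨h1, h2⟩ := hm
  have e : (g * h * g⁻¹).fst = g.fst + lam g.snd h.fst + -g.fst := by
    show (g.fst + lam g.snd h.fst) + lam (g.snd * h.snd) (lam g.snd⁻¹ (-g.fst)) = _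
    rw [h1, mul_one, ← lam_lam, mul_inv_cancel, lam_one']
  refine ⟨?_, ?_⟩
  · show (g.snd * h.snd) * g.snd⁻¹ = 1
    rw [h1, mul_one, mul_inv_cancel]
  · show (g * h * g⁻¹).fst ∈ P.carrier
    rw [e]
    exact P.addConj_mem g.fst (P.lam_mem g.snd h2)

theorem comm_SG (x g : B) :
    ⁅(⟨x, 1⟩ : SProd B), (⟨0, g⟩ : SProd B)⁆ = ⟨x + -(lam g x), 1⟩ := by
  have h_inv1 : (⟨x, 1⟩ : SProd B)⁻¹ = ⟨-x, 1⟩ := by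
    show (⟨lam (1:B)⁻¹ (-x), (1:B)⁻¹⟩ : SProd B) = _
    rw [inv_one, lam_one']
  have h_inv2 : (⟨0, g⟩ : SProd B)⁻¹ = ⟨0, g⁻¹⟩ := by
    show (⟨lam g⁻¹ (-0 : B), g⁻¹⟩ : SProd B) = _
    rw [neg_zero, lam_zero']
  have e1 : (⟨x, 1⟩ : SProd B) * ⟨0, g⟩ = ⟨x, g⟩ := by
    show (⟨x + lam 1 0, 1 * g⟩ : SProd B) = _
    rw [lam_zero', add_zero, one_mul]
  have e2 : (⟨x, g⟩ : SProd B) * ⟨-x, 1⟩ = ⟨x + -(lam g x), g⟩ := by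
    show (⟨x + lam g (-x), g * 1⟩ : SProd B) = _
    rw [lam_neg', mul_one]
  have e3 : (⟨x + -(lam g x), g⟩ : SProd B) * ⟨0, g⁻¹⟩ = ⟨x + -(lam g x), 1⟩ := by
    show (⟨(x + -(lam g x)) + lam g 0, g * g⁻¹⟩ : SProd B) = _
    rw [lam_zero', add_zero, mul_inv_cancel]
  rw [commutatorElement_def, h_inv1, h_inv2, e1, e2, e3]

/-- three subgroups lemma, relative version -/
theorem tsl {H : Type*} [Group H] (X Y Z N : Subgroup H) [hN : N.Normal]
    (h1 : ⁅⁅Y, Z⁆, X⁆ ≤ N) (h2 : ⁅⁅Z, X⁆, Y⁆ ≤ N) : ⁅⁅X, Y⁆, Z⁆ ≤ N := by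
  set f := QuotientGroup.mk' N with hf
  have conv : ∀ W : Subgroup H, W ≤ N ↔ W.map f = ⊥ := by
    intro W
    rw [Subgroup.map_eq_bot_iff, QuotientGroup.ker_mk']
  rw [conv, Subgroup.map_commutator, Subgroup.map_commutator]
  apply Subgroup.commutator_commutator_eq_bot_of_rotate
  · rw [← Subgroup.map_commutator, ← Subgroup.map_commutator, ← conv]; exact h1
  · rw [← Subgroup.map_commutator, ← Subgroup.map_commutator, ← conv]; exact h2

theorem stab_lcs (nI : ℕ) (J : ℕ → BraceIdeal B) (hJ0 : (J 0).carrier = {0})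
    (hJtop : ∀ x : B, x ∈ (J nI).carrier)
    (hJstab : ∀ k a x, x ∈ (J (k+1)).carrier → -x + lam a x ∈ (J k).carrier) :
    ∀ g ∈ (⊤ : Subgroup B).lowerCentralSeries nI, ∀ x : B, lam g x = x := by
  set Γ : ℕ → Subgroup (SProd B) := fun j => ((⊤ : Subgroup B).lowerCentralSeries j).map sdr with hΓ
  have flip : ∀ (P : BraceIdeal B) (x w : B), -x + w ∈ P.carrier → x + -w ∈ P.carrier := by
    intro P x w h
    have h3 := P.addConj_mem x (P.neg_mem h)
    rw [neg_add_rev, neg_neg] at h3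
    have he : x + (-w + x) + -x = x + -w :=
      grp1 (G := Multiplicative B) (Multiplicative.ofAdd x) (Multiplicative.ofAdd w)
    rwa [he] at h3
  have hmem_comm : ∀ (P : BraceIdeal B) (i : ℕ), (∀ x, x ∈ (J i).carrier →
      ∀ g : B, (⟨x, 1⟩ : SProd B) ∈ SG (J i)) := fun P i x hx g => ⟨rfl, hx⟩
  have base : ∀ i, ⁅SG (J i), Γ 0⁆ ≤ SG (J i) := by
    intro i
    rw [Subgroup.commutator_le]
    rintro g₁ ⟨hg1s, hg1f⟩ g₂ hg₂
    obtain ⟨g, -, rfl⟩ := Subgroup.mem_map.mp hg₂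
    have hg₁ : (⟨g₁.fst, 1⟩ : SProd B) = g₁ := by
      ext
      · rfl
      · exact hg1s.symm
    rw [← hg₁, show sdr g = (⟨0, g⟩ : SProd B) from rfl, comm_SG]
    exact ⟨rfl, (J i).add_mem hg1f ((J i).neg_mem ((J i).lam_mem g hg1f))⟩
  have hstab : ∀ i, ⁅SG (J i), Γ 0⁆ ≤ SG (J (i - 1)) := by
    intro i
    rw [Subgroup.commutator_le]
    rintro g₁ ⟨hg1s, hg1f⟩ g₂ hg₂
    obtain ⟨g, -, rfl⟩ := Subgroup.mem_map.mp hg₂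
    have hg₁ : (⟨g₁.fst, 1⟩ : SProd B) = g₁ := by
      ext
      · rfl
      · exact hg1s.symm
    rw [← hg₁, show sdr g = (⟨0, g⟩ : SProd B) from rfl, comm_SG]
    refine ⟨rfl, ?_⟩
    cases i with
    | zero =>
      have hx0 : g₁.fst = 0 := by rw [hJ0] at hg1f; exact hg1f
      rw [hx0, lam_zero', neg_zero, add_zero, hJ0]
      exact Set.mem_singleton _
    | succ k =>
      have h := hJstab k g _ hg1f
      have h2 := flip (J k) g₁.fst (lam g g₁.fst) h
      rwa [Nat.add_sub_cancel]
  have claim : ∀ j i, ⁅SG (J i), Γ j⁆ ≤ SG (J (i - j)) := by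
    intro j
    induction j with
    | zero => intro i; rw [Nat.sub_zero]; exact base i
    | succ j ih =>
      intro i
      have hΓs : Γ (j+1) = ⁅Γ j, Γ 0⁆ := by
        show ((⊤ : Subgroup B).lowerCentralSeries (j+1)).map sdr = _
        rw [show (⊤ : Subgroup B).lowerCentralSeries (j+1) = ⁅(⊤ : Subgroup B).lowerCentralSeries j, ⊤⁆ from rfl,
          Subgroup.map_commutator]
        rfl
      rw [hΓs, Subgroup.commutator_comm]
      apply tsl
      · have e1 : ⁅Γ 0, SG (J i)⁆ ≤ SG (J (i-1)) := by
          rw [Subgroup.commutator_comm]; exact hstab i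
        refine le_trans (Subgroup.commutator_mono e1 le_rfl) ?_
        have h := ih (i - 1)
        rwa [show i - 1 - j = i - (j+1) by omega] at h
      · refine le_trans (Subgroup.commutator_mono (ih i) le_rfl) ?_
        have h := hstab (i - j)
        rwa [show i - j - 1 = i - (j+1) by omega] at h
  intro g hg x
  have hmem : ⁅(⟨x, 1⟩ : SProd B), sdr g⁆ ∈ ⁅SG (J nI), Γ nI⁆ :=
    Subgroup.commutator_mem_commutator ⟨rfl, hJtop x⟩ (Subgroup.mem_map.mpr ⟨g, hg, rfl⟩)
  have h2 : ⁅(⟨x, 1⟩ : SProd B), sdr g⁆ ∈ SG (J 0) := by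
    have h := claim nI nI hmem
    rwa [Nat.sub_self] at h
  rw [show sdr g = (⟨0, g⟩ : SProd B) from rfl, comm_SG] at h2
  obtain ⟨-, hf⟩ := h2
  rw [hJ0] at hf
  exact (add_neg_eq_zero.mp hf).symm

end NilpotencyProof

/-- Let `B` be a supersoluble brace. If `B` is left-nilpotent and
`Ker(λ) ⊆ Z_n(B,·)` for some `n`, then `(B,·)` is nilpotent. -/
theorem mul_nilpotent_of_leftNilpotent (B : Type*) [SkewBrace B]
    (hB : IsSupersoluble B) (hln : IsLeftNilpotent B) (n : ℕ)
    (hker : {x : B | ∀ b : B, lam x b = b} ⊆ ↑(upperCentralSeries B n)) :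
    Group.IsNilpotent B := by
  obtain ⟨nI, I, hI0, hIn, hmono, hfac⟩ := hB
  obtain ⟨m, hLm⟩ := hln
  have tfa : ∀ i, i < nI → ∀ a x, x ∈ (I (i+1)).carrier → -x + lam a x ∈ (I i).carrier := by
    intro i hi
    rcases hfac i hi with ⟨⟨x₀, hx₀, hgen, hfree⟩, -⟩ | ⟨p, hp, x₀, hx₀, hx₀N, hpx, hgen⟩
    · exact trivial_factor_action (I i) (I (i+1)) (hmono i hi) m hLm x₀ hx₀ hgen (Or.inl hfree)
    · refine trivial_factor_action (I i) (I (i+1)) (hmono i hi) m hLm x₀ hx₀ hgen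
        (Or.inr ⟨p, hp, hx₀N, ?_⟩)
      rwa [natCast_zsmul]
  set J : ℕ → BraceIdeal B := fun k => I (min k nI) with hJ
  have hJ0 : (J 0).carrier = {0} := by
    show (I (min 0 nI)).carrier = {0}
    rw [Nat.zero_min]
    exact hI0
  have hJtop : ∀ x : B, x ∈ (J nI).carrier := by
    intro x
    show x ∈ (I (min nI nI)).carrier
    rw [Nat.min_self, hIn]
    trivial
  have hJstab : ∀ k a x, x ∈ (J (k+1)).carrier → -x + lam a x ∈ (J k).carrier := by
    intro k a x hx
    rcases Nat.lt_or_ge k nI with h | h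
    · have hx' : x ∈ (I (min (k+1) nI)).carrier := hx
      rw [min_eq_left (Nat.succ_le_of_lt h)] at hx'
      show _ ∈ (I (min k nI)).carrier
      rw [min_eq_left h.le]
      exact tfa k h a x hx'
    · show _ ∈ (I (min k nI)).carrier
      rw [min_eq_right h, hIn]
      trivial
  have key := stab_lcs nI J hJ0 hJtop hJstab
  have hlcs : (⊤ : Subgroup B).lowerCentralSeries nI ≤ upperCentralSeries B n := by
    intro g hg
    exact hker (key g hg)
  have down : ∀ k, (⊤ : Subgroup B).lowerCentralSeries (nI + k) ≤ upperCentralSeries B (n - k) := by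
    intro k
    induction k with
    | zero => simpa using hlcs
    | succ k ih =>
      rcases Nat.lt_or_ge k n with hk | hk
      · have h2 : n - k = (n - (k+1)) + 1 := by omega
        have he : (⊤ : Subgroup B).lowerCentralSeries (nI + (k+1)) = ⁅(⊤ : Subgroup B).lowerCentralSeries (nI + k), ⊤⁆ := rfl
        rw [he, Subgroup.commutator_le]
        intro g₁ hg₁ g₂ _
        have hmem := ih hg₁
        rw [h2] at hmem
        exact mem_upperCentralSeries_succ_iff.mp hmem g₂
      · have h1 : n - (k+1) = 0 := by omega
        have h0 : n - k = 0 := by omega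
        rw [h1]
        rw [h0] at ih
        exact le_trans (lowerCentralSeries_antitone ⊤ (by omega : nI + k ≤ nI + (k+1))) ih
  have final := down n
  rw [Nat.sub_self, show upperCentralSeries B 0 = ⊥ from Subgroup.upperCentralSeries_zero B] at final
  exact nilpotent_iff_lowerCentralSeries.mpr ⟨nI + n, le_bot_iff.mp final⟩

end SkewBrace
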